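/- arXiv:2602.16598 — 3 statements merged into one kernel-verified Lean document; each statement's English description precedes it below -/
import Mathlib

section
/- Let M be a 2n×2n real symmetric positive definite matrix written in block form M = [A, B; Bᵀ, C] with n×n blocks, where A is positive definite, and let P be a 2n×2n real symmetric matrix with blocks [P₁₁, P₁₂; P₁₂ᵀ, P₂₂]. If M⁻¹ ≼ P, then (C − Bᵀ A⁻¹ B)⁻¹ ≼ P₂₂. -/
open Matrix

/-- If `M = [A, B; Bᵀ, C]` is real symmetric positive definite with `A` positive
definite, and `P = [P₁₁, P₁₂; P₁₂ᵀ, P₂₂]` is real symmetric with `M⁻¹ ≼ P`, then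
`(C - Bᵀ A⁻¹ B)⁻¹ ≼ P₂₂`. -/
theorem stmt6 {n : ℕ} (A B C P₁₁ P₁₂ P₂₂ : Matrix (Fin n) (Fin n) ℝ)
    (hM : (Matrix.fromBlocks A B Bᵀ C).PosDef) (hA : A.PosDef)
    (hP₁₁ : P₁₁.IsSymm) (hP₂₂ : P₂₂.IsSymm)
    (h : (Matrix.fromBlocks P₁₁ P₁₂ P₁₂ᵀ P₂₂ -
          (Matrix.fromBlocks A B Bᵀ C)⁻¹).PosSemidef) :
    (P₂₂ - (C - Bᵀ * A⁻¹ * B)⁻¹).PosSemidef := by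
  haveI hAinv : Invertible A := hA.isUnit.invertible
  haveI hMinv : Invertible (fromBlocks A B Bᵀ C) := hM.isUnit.invertible
  have hinvA : (⅟ A : Matrix (Fin n) (Fin n) ℝ) = A⁻¹ := invOf_eq_nonsing_inv A
  -- the Schur complement is invertible
  have hdet : IsUnit (C - Bᵀ * A⁻¹ * B).det := by
    have hdM : IsUnit (fromBlocks A B Bᵀ C).det := hM.det_pos.ne'.isUnit
    rw [det_fromBlocks₁₁, hinvA] at hdM
    exact (IsUnit.mul_iff.mp hdM).2
  haveI hSinv : Invertible (C - Bᵀ * A⁻¹ * B) := (C - Bᵀ * A⁻¹ * B).invertibleOfIsUnitDet hdet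
  -- compute the (2,2) block of the inverse
  have hS' : C - Bᵀ * ⅟ A * B = C - Bᵀ * A⁻¹ * B := by rw [hinvA]
  haveI : Invertible (C - Bᵀ * ⅟ A * B) := hS' ▸ hSinv
  have hkey : ∀ i j, (fromBlocks A B Bᵀ C)⁻¹ (Sum.inr i) (Sum.inr j)
      = (C - Bᵀ * A⁻¹ * B)⁻¹ i j := by
    intro i j
    rw [← invOf_eq_nonsing_inv, invOf_fromBlocks₁₁_eq A B Bᵀ C]
    simp only [fromBlocks_apply₂₂]
    rw [invOf_eq_nonsing_inv, hS']
  -- extract the (2,2) block of the PSD hypothesis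
  have h2 := h.submatrix (Sum.inr : Fin n → Fin n ⊕ Fin n)
  convert h2 using 1
  ext i j
  simp [Matrix.submatrix_apply, Matrix.sub_apply, hkey i j]
end

section
/- Let q > 0, r > 0, k > 0 be real numbers. For m ∈ ℝ define the real symmetric 2×2 matrix S(m) = ![![k⁻² + m/q + r⁻¹, m/q], ![m/q, m/q − k⁻²]]. Then S(m) is positive semidefinite if and only if m ≥ q·(k⁻² + r·k⁻⁴). Consequently, the minimal constant sensor query rate achieving the accuracy constraint is m_s = q·(1/k² + r/k⁴). -/
open Matrix


lemma quad_eval (a b c : ℝ) (x : Fin 2 → ℝ) :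
    (star x) ⬝ᵥ (!![a, b; b, c] : Matrix (Fin 2) (Fin 2) ℝ) *ᵥ x =
      a * x 0 ^ 2 + 2 * b * x 0 * x 1 + c * x 1 ^ 2 := by
  simp [mulVec, dotProduct, Fin.sum_univ_two]; ring

lemma psd2 (a b c : ℝ) :
    (!![a, b; b, c] : Matrix (Fin 2) (Fin 2) ℝ).PosSemidef ↔
      0 ≤ a ∧ 0 ≤ c ∧ b ^ 2 ≤ a * c := by
  rw [Matrix.posSemidef_iff_dotProduct_mulVec]
  constructor
  · intro h
    have ha := h.2 ![1, 0]; rw [quad_eval] at ha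
    have hc := h.2 ![0, 1]; rw [quad_eval] at hc
    have h1 := h.2 ![c, -b]; rw [quad_eval] at h1
    have h2 := h.2 ![b, -a]; rw [quad_eval] at h2
    have h3 := h.2 ![1, -1]; rw [quad_eval] at h3
    have h4 := h.2 ![1, 1]; rw [quad_eval] at h4
    simp at ha hc h1 h2 h3 h4
    refine ⟨by linarith, by linarith, ?_⟩
    nlinarith [mul_nonneg h3 h4, sq_nonneg b, sq_nonneg (a - c), sq_nonneg (a + c)]
  · rintro ⟨ha, hc, hb⟩
    refine ⟨?_, fun x => ?_⟩
    · ext i j; fin_cases i <;> fin_cases j <;> simp [conjTranspose, Matrix.vecHead, Matrix.vecTail]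
    · rw [quad_eval]
      rcases eq_or_lt_of_le ha with h | h
      · have hb0 : b = 0 := by nlinarith
        have ha0 : a = 0 := h.symm
        subst hb0 ha0
        nlinarith [mul_nonneg hc (sq_nonneg (x 1))]
      · nlinarith [sq_nonneg (a * x 0 + b * x 1), sq_nonneg (x 1), mul_nonneg (sub_nonneg.mpr hb) (sq_nonneg (x 1))]

lemma key (q r k : ℝ) (hq : 0 < q) (hr : 0 < r) (hk : 0 < k) (m : ℝ) :
    (!![(k ^ 2)⁻¹ + m / q + r⁻¹, m / q; m / q, m / q - (k ^ 2)⁻¹] :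
        Matrix (Fin 2) (Fin 2) ℝ).PosSemidef ↔
      m ≥ q * ((k ^ 2)⁻¹ + r * (k ^ 4)⁻¹) := by
  rw [psd2]
  have hk2 : (0:ℝ) < k ^ 2 := by positivity
  have hk4eq : (k ^ 4)⁻¹ = (k ^ 2)⁻¹ * (k ^ 2)⁻¹ := by
    rw [show k ^ 4 = k ^ 2 * k ^ 2 by ring, mul_inv]
  rw [hk4eq]
  set A := (k ^ 2)⁻¹ with hAdef
  set B := r⁻¹ with hBdef
  set U := m / q with hUdef
  have hA : 0 < A := inv_pos.mpr hk2
  have hB : 0 < B := inv_pos.mpr hr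
  have hBr : r * B = 1 := mul_inv_cancel₀ hr.ne'
  have hU : q * U = m := mul_div_cancel₀ m hq.ne'
  constructor
  · rintro ⟨-, -, h3⟩
    rw [ge_iff_le]
    have e1 : q * r * B * U = m := by
      calc q * r * B * U = q * U * (r * B) := by ring
      _ = m := by rw [hBr, hU, mul_one]
    have e2 : q * r * A * B = q * A := by
      calc q * r * A * B = q * A * (r * B) := by ring
      _ = q * A := by rw [hBr, mul_one]
    nlinarith [mul_nonneg (mul_nonneg hq.le hr.le) (sub_nonneg.2 h3), e1, e2]
  · intro hm
    rw [ge_iff_le] at hm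
    have hU' : A + r * (A * A) ≤ U := by
      rw [hUdef, le_div_iff₀ hq]
      linarith [hm]
    have e4 : B * r * (A * A) = A * A := by
      rw [mul_comm B r, hBr, one_mul]
    have e5 : B * r * A = A := by rw [mul_comm B r, hBr, one_mul]
    refine ⟨?_, ?_, ?_⟩
    · nlinarith [mul_nonneg hr.le (mul_nonneg hA.le hA.le)]
    · nlinarith [mul_nonneg hr.le (mul_nonneg hA.le hA.le)]
    · nlinarith [mul_nonneg hB.le (sub_nonneg.2 hU'), e4, e5]


/-- One-dimensional constant-query-rate SDP: for `q, r, k > 0`, the `2 × 2` matrix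
`S(m) = [[k⁻² + m/q + r⁻¹, m/q], [m/q, m/q - k⁻²]]` is positive semidefinite iff
`m ≥ q (k⁻² + r k⁻⁴)`; consequently the minimal feasible constant query rate is
`m_s = q (1/k² + r/k⁴)`. -/
theorem stmt12 (q r k : ℝ) (hq : 0 < q) (hr : 0 < r) (hk : 0 < k) :
    (∀ m : ℝ,
      (!![(k ^ 2)⁻¹ + m / q + r⁻¹, m / q; m / q, m / q - (k ^ 2)⁻¹] :
          Matrix (Fin 2) (Fin 2) ℝ).PosSemidef ↔
        m ≥ q * ((k ^ 2)⁻¹ + r * (k ^ 4)⁻¹)) ∧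
    IsLeast {m : ℝ |
        (!![(k ^ 2)⁻¹ + m / q + r⁻¹, m / q; m / q, m / q - (k ^ 2)⁻¹] :
          Matrix (Fin 2) (Fin 2) ℝ).PosSemidef}
      (q * (1 / k ^ 2 + r / k ^ 4)) := by
  have heq : q * (1 / k ^ 2 + r / k ^ 4) = q * ((k ^ 2)⁻¹ + r * (k ^ 4)⁻¹) := by
    rw [one_div, div_eq_mul_inv]
  refine ⟨fun m => key q r k hq hr hk m, ?_, ?_⟩
  · rw [Set.mem_setOf_eq, key q r k hq hr hk, heq]
  · intro m hm
    rw [Set.mem_setOf_eq, key q r k hq hr hk] at hm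
    rw [heq]
    exact hm
end

section
/- Let D₁₁ be an n×n real symmetric positive semidefinite matrix, D₁₂ an n×n real matrix, D₂₂ an n×n real symmetric matrix, and k > 0. Assume the block matrix Matrix.fromBlocks (k⁻²·I + D₁₁) D₁₂ D₁₂ᵀ (D₂₂ − k⁻²·I) is positive semidefinite. Define the sequence J₀ = k⁻²·I and J_{n+1} = D₂₂ − D₁₂ᵀ (D₁₁ + J_n)⁻¹ D₁₂. Then for every n, the matrix D₁₁ + J_n is positive definite (so the recursion is well defined) and k⁻²·I ≼ J_n. -/
open Matrix

lemma aux_fromBlocks_psd {d : ℕ} {P : Matrix (Fin d) (Fin d) ℝ} (hP : P.PosSemidef) :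
    (Matrix.fromBlocks P 0 0 (0 : Matrix (Fin d) (Fin d) ℝ)).PosSemidef := by
  refine Matrix.PosSemidef.of_dotProduct_mulVec_nonneg ?_ ?_
  · unfold Matrix.IsHermitian
    rw [Matrix.fromBlocks_conjTranspose]
    simp only [Matrix.conjTranspose_zero]
    rw [hP.1.eq]
  · intro x
    have := hP.dotProduct_mulVec_nonneg (x ∘ Sum.inl)
    simpa [dotProduct, Matrix.mulVec, Fintype.sum_sum_type, Matrix.fromBlocks] using this

lemma aux_smul_one_posdef {d : ℕ} {c : ℝ} (hc : 0 < c) :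
    (c • (1 : Matrix (Fin d) (Fin d) ℝ)).PosDef := by
  have : c • (1 : Matrix (Fin d) (Fin d) ℝ) = Matrix.diagonal (fun _ => c) := by
    simp [Matrix.smul_eq_diagonal_mul]
  rw [this]
  exact Matrix.PosDef.diagonal (fun _ => hc)

lemma aux_ct_eq_t {d : ℕ} (M : Matrix (Fin d) (Fin d) ℝ) : Mᴴ = Mᵀ := by
  ext i j; simp [Matrix.conjTranspose_apply]

/-- Invariance of the information bound under the posterior Cramér–Rao recursion:
if the block matrix `[k⁻²•I + D₁₁, D₁₂; D₁₂ᵀ, D₂₂ - k⁻²•I]` is positive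
semidefinite and `J₀ = k⁻²•I`, `J_{n+1} = D₂₂ - D₁₂ᵀ (D₁₁ + J_n)⁻¹ D₁₂`, then for
every `n` the matrix `D₁₁ + J_n` is positive definite and `k⁻²•I ≼ J_n`. -/
theorem stmt14 {d : ℕ} (D₁₁ D₁₂ D₂₂ : Matrix (Fin d) (Fin d) ℝ)
    (hD₁₁ : D₁₁.PosSemidef) (hD₂₂ : D₂₂.IsSymm) (k : ℝ) (hk : 0 < k)
    (hblock : (Matrix.fromBlocks
        ((k ^ 2)⁻¹ • (1 : Matrix (Fin d) (Fin d) ℝ) + D₁₁) D₁₂ D₁₂ᵀ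
        (D₂₂ - (k ^ 2)⁻¹ • (1 : Matrix (Fin d) (Fin d) ℝ))).PosSemidef)
    (J : ℕ → Matrix (Fin d) (Fin d) ℝ)
    (hJ0 : J 0 = (k ^ 2)⁻¹ • (1 : Matrix (Fin d) (Fin d) ℝ))
    (hJsucc : ∀ n : ℕ, J (n + 1) = D₂₂ - D₁₂ᵀ * (D₁₁ + J n)⁻¹ * D₁₂) :
    ∀ n : ℕ, (D₁₁ + J n).PosDef ∧
      (J n - (k ^ 2)⁻¹ • (1 : Matrix (Fin d) (Fin d) ℝ)).PosSemidef := by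
  set c : ℝ := (k ^ 2)⁻¹ with hc
  have hcpos : 0 < c := by positivity
  have hcI : (c • (1 : Matrix (Fin d) (Fin d) ℝ)).PosDef := aux_smul_one_posdef hcpos
  intro n
  induction n with
  | zero =>
    refine ⟨?_, ?_⟩
    · rw [hJ0]; exact Matrix.PosDef.posSemidef_add hD₁₁ hcI
    · rw [hJ0]; simpa using Matrix.PosSemidef.zero
  | succ n ih =>
    obtain ⟨hpd, hpsd⟩ := ih
    have hM : (Matrix.fromBlocks (D₁₁ + J n) D₁₂ D₁₂ᴴ
        (D₂₂ - c • (1 : Matrix (Fin d) (Fin d) ℝ))).PosSemidef := by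
      have heq : Matrix.fromBlocks (D₁₁ + J n) D₁₂ D₁₂ᴴ
          (D₂₂ - c • (1 : Matrix (Fin d) (Fin d) ℝ)) =
          Matrix.fromBlocks (c • (1 : Matrix (Fin d) (Fin d) ℝ) + D₁₁) D₁₂ D₁₂ᵀ
            (D₂₂ - c • (1 : Matrix (Fin d) (Fin d) ℝ)) +
          Matrix.fromBlocks (J n - c • (1 : Matrix (Fin d) (Fin d) ℝ)) 0 0 0 := by
        rw [Matrix.fromBlocks_add, aux_ct_eq_t, Matrix.fromBlocks_inj]
        refine ⟨by abel, by simp, by simp, by simp⟩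
      rw [heq]
      exact hblock.add (aux_fromBlocks_psd hpsd)
    haveI : Invertible (D₁₁ + J n) := hpd.isUnit.invertible
    have hschur : (D₂₂ - c • (1 : Matrix (Fin d) (Fin d) ℝ) -
        D₁₂ᴴ * (D₁₁ + J n)⁻¹ * D₁₂).PosSemidef :=
      (Matrix.PosDef.fromBlocks₁₁ D₁₂
        (D₂₂ - c • (1 : Matrix (Fin d) (Fin d) ℝ)) hpd).mp hM
    rw [aux_ct_eq_t] at hschur
    refine ⟨?_, ?_⟩
    · rw [hJsucc]
      have h2 : D₁₁ + (D₂₂ - D₁₂ᵀ * (D₁₁ + J n)⁻¹ * D₁₂) =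
          (D₂₂ - c • (1 : Matrix (Fin d) (Fin d) ℝ) - D₁₂ᵀ * (D₁₁ + J n)⁻¹ * D₁₂) +
          (c • (1 : Matrix (Fin d) (Fin d) ℝ) + D₁₁) := by abel
      rw [h2]
      exact Matrix.PosDef.posSemidef_add hschur (hcI.add_posSemidef hD₁₁)
    · rw [hJsucc]
      have h3 : D₂₂ - D₁₂ᵀ * (D₁₁ + J n)⁻¹ * D₁₂ - c • (1 : Matrix (Fin d) (Fin d) ℝ) =
          D₂₂ - c • (1 : Matrix (Fin d) (Fin d) ℝ) - D₁₂ᵀ * (D₁₁ + J n)⁻¹ * D₁₂ := by abel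
      rw [h3]
      exact hschur
end
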